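/- Let n ≥ 2, 1 ≤ k ≤ n-1, and let 0 = V_0 ⊊ V_1 ⊊ ⋯ ⊊ V_k = V be a flag of length k in V, where V = {(x_1,…,x_n) ∈ ℝ^n : x_1 + ⋯ + x_n = 0}. Then the set T = {A ∈ Q_n : A·V_i ⊆ V_{i-1} for all i = 1,…,k} is a maximal element of Nil_k(Q_n), and its nilpotency class equals k. -/

import Mathlib

namespace NilSg

variable {M : Type*}

/-- `T ⊆ M` is closed under multiplication. -/
def IsSubsg [Mul M] (T : Set M) : Prop :=
  ∀ ⦃a⦄, a ∈ T → ∀ ⦃b⦄, b ∈ T → a * b ∈ T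

/-- Every product of exactly `k` elements of `T` equals `z`
(such products are the products of nonempty lists `a :: l` of elements of `T`). -/
def ProdEq [Mul M] (z : M) (T : Set M) (k : ℕ) : Prop :=
  ∀ (a : M) (l : List M), a ∈ T → (∀ x ∈ l, x ∈ T) → l.length + 1 = k →
    l.foldl (· * ·) a = z

/-- `T` is a nilpotent subsemigroup with respect to the zero element `z`. -/
def IsNilSubsg [Mul M] (z : M) (T : Set M) : Prop :=
  IsSubsg T ∧ ∃ k, 0 < k ∧ ProdEq z T k

/-- The nilpotency class of `T`: the minimal `k ≥ 1` such that every product of `k`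
elements of `T` equals `z`. -/
noncomputable def nilClass [Mul M] (z : M) (T : Set M) : ℕ :=
  sInf {k | 0 < k ∧ ProdEq z T k}

/-- `T` is a nilpotent subsemigroup of `S` (with zero `z`). -/
def NilIn [Mul M] (z : M) (S : Set M) (T : Set M) : Prop :=
  T ⊆ S ∧ IsNilSubsg z T

/-- `T` is a nilpotent subsemigroup of `S` (with zero `z`) of nilpotency class at most `k`. -/
def NilLe [Mul M] (z : M) (S : Set M) (k : ℕ) (T : Set M) : Prop :=
  T ⊆ S ∧ IsNilSubsg z T ∧ nilClass z T ≤ k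

/-- `Ω n`: the semigroup of `n × n` real matrices with nonnegative entries. -/
def Omega (n : ℕ) : Set (Matrix (Fin n) (Fin n) ℝ) :=
  {A | ∀ i j, 0 ≤ A i j}

/-- `Q n`: the semigroup of `n × n` real matrices all of whose row sums and
column sums equal `1`. -/
def Qset (n : ℕ) : Set (Matrix (Fin n) (Fin n) ℝ) :=
  {A | (∀ i, ∑ j, A i j = 1) ∧ (∀ j, ∑ i, A i j = 1)}

/-- `D n`: the semigroup of `n × n` doubly stochastic real matrices. -/
def Dset (n : ℕ) : Set (Matrix (Fin n) (Fin n) ℝ) :=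
  {A | (∀ i j, 0 ≤ A i j) ∧ (∀ i, ∑ j, A i j = 1) ∧ (∀ j, ∑ i, A i j = 1)}

/-- The matrix all of whose entries equal `1/n`: the zero element of `Q n` and `D n`. -/
noncomputable def On (n : ℕ) : Matrix (Fin n) (Fin n) ℝ :=
  Matrix.of fun _ _ => (n : ℝ)⁻¹

/-- The hyperplane `V` of all vectors whose coordinates sum to `0`. -/
def Vsub (n : ℕ) : Submodule ℝ (Fin n → ℝ) where
  carrier := {x | ∑ i, x i = 0}
  add_mem' := by
    intro a b ha hb
    simp only [Set.mem_setOf_eq, Pi.add_apply] at *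
    simp [Finset.sum_add_distrib, ha, hb]
  zero_mem' := by simp
  smul_mem' := by
    intro c x hx
    simp only [Set.mem_setOf_eq, Pi.smul_apply, smul_eq_mul] at *
    simp [← Finset.mul_sum, hx]

-- AUX START

lemma mem_Vsub {n : ℕ} {x : Fin n → ℝ} : x ∈ Vsub n ↔ ∑ i, x i = 0 := Iff.rfl

lemma foldl_mem_aux {T : Set M} [Mul M] (hT : IsSubsg T) :
    ∀ (l : List M) (a : M), a ∈ T → (∀ x ∈ l, x ∈ T) → l.foldl (· * ·) a ∈ T := by
  intro l
  induction l with
  | nil => intro a ha _; exact ha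
  | cons b l ih =>
    intro a ha hl
    exact ih (a * b) (hT ha (hl b (by simp))) (fun x hx => hl x (by simp [hx]))

lemma prodEq_mono_aux [Mul M] {z : M} {T : Set M} (hT : IsSubsg T) {k m : ℕ}
    (hk : 0 < k) (h : ProdEq z T k) (hkm : k ≤ m) : ProdEq z T m := by
  intro a l ha hl hlen
  rw [show l = l.take (m - k) ++ l.drop (m - k) from (List.take_append_drop _ _).symm,
    List.foldl_append]
  apply h
  · exact foldl_mem_aux hT _ _ ha (fun x hx => hl x (List.take_subset _ _ hx))
  · intro x hx; exact hl x (List.drop_subset _ _ hx)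
  · rw [List.length_drop]; omega

lemma chain_foldl_aux {n : ℕ} (M : ℕ → Matrix (Fin n) (Fin n) ℝ) (y : ℕ → Fin n → ℝ) :
    ∀ K, 1 ≤ K → (∀ t, 1 ≤ t → t ≤ K → (M t).mulVec (y t) = y (t - 1)) →
      (((List.range (K - 1)).map (fun s => M (s + 2))).foldl (· * ·) (M 1)).mulVec (y K)
        = y 0 := by
  intro K
  induction K with
  | zero => omega
  | succ K ih =>
    intro _ h
    by_cases hK : K = 0
    · subst hK
      simpa using h 1 le_rfl le_rfl
    · have hK1 : 1 ≤ K := by omega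
      rw [show K + 1 - 1 = (K - 1) + 1 from by omega, List.range_succ, List.map_append,
        List.foldl_append]
      simp only [List.map_cons, List.map_nil, List.foldl_cons, List.foldl_nil]
      rw [show K - 1 + 2 = K + 1 from by omega, ← Matrix.mulVec_mulVec,
        h (K + 1) (by omega) le_rfl, show K + 1 - 1 = K from by omega]
      exact ih hK1 (fun t ht htK => h t ht (by omega))

noncomputable def extMat (n : ℕ) (g : (Fin n → ℝ) →ₗ[ℝ] (Fin n → ℝ)) :
    Matrix (Fin n) (Fin n) ℝ :=
  Matrix.of fun i j => g (fun t => if j = t then 1 else 0) i + (n : ℝ)⁻¹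

lemma extMat_mulVec {n : ℕ} (g : (Fin n → ℝ) →ₗ[ℝ] (Fin n → ℝ)) (x : Fin n → ℝ)
    (hx : ∑ j, x j = 0) : (extMat n g).mulVec x = g x := by
  funext i
  have hgi : g x i = ∑ j, x j * g (fun t => if j = t then 1 else 0) i := by
    rw [LinearMap.pi_apply_eq_sum_univ g x]
    simp [Finset.sum_apply]
  simp only [extMat, Matrix.mulVec, dotProduct, Matrix.of_apply]
  rw [hgi, Finset.sum_congr rfl (fun j _ =>
    show (g (fun t => if j = t then 1 else 0) i + (n : ℝ)⁻¹) * x j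
      = x j * g (fun t => if j = t then 1 else 0) i + (n : ℝ)⁻¹ * x j from by ring),
    Finset.sum_add_distrib, ← Finset.mul_sum, hx]
  simp

lemma extMat_mem {n : ℕ} (hn : 0 < n) (g : (Fin n → ℝ) →ₗ[ℝ] (Fin n → ℝ))
    (hg1 : g (fun _ => 1) = 0) (hgV : ∀ x, g x ∈ Vsub n) : extMat n g ∈ Qset n := by
  have hsum : (∑ j : Fin n, g (fun t => if j = t then 1 else 0)) = 0 := by
    rw [← map_sum]
    rw [show (∑ j : Fin n, (fun t => if j = t then (1:ℝ) else 0)) = (fun _ => 1) from by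
      funext t; simp]
    exact hg1
  constructor
  · intro i
    simp only [extMat, Matrix.of_apply]
    rw [Finset.sum_add_distrib]
    have h2 : ∑ j : Fin n, g (fun t => if j = t then 1 else 0) i = 0 := by
      have := congrFun hsum i
      rw [Finset.sum_apply] at this
      simpa using this
    rw [h2]
    simp
    field_simp
  · intro j
    simp only [extMat, Matrix.of_apply]
    rw [Finset.sum_add_distrib]
    have h2 : ∑ i : Fin n, g (fun t => if j = t then 1 else 0) i = 0 :=
      hgV (fun t => if j = t then 1 else 0)
    rw [h2]
    simp
    field_simp

lemma qset_mul_aux {n : ℕ} {A B : Matrix (Fin n) (Fin n) ℝ} (hA : A ∈ Qset n)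
    (hB : B ∈ Qset n) : A * B ∈ Qset n := by
  constructor
  · intro i
    simp only [Matrix.mul_apply]
    rw [Finset.sum_comm]
    calc ∑ l, ∑ j, A i l * B l j = ∑ l, A i l * ∑ j, B l j := by
          simp [Finset.mul_sum]
      _ = 1 := by simp only [hB.1]; simpa using hA.1 i
  · intro j
    simp only [Matrix.mul_apply]
    calc ∑ i, ∑ l, A i l * B l j = ∑ l, ∑ i, A i l * B l j := Finset.sum_comm
      _ = ∑ l, (∑ i, A i l) * B l j := by simp [Finset.sum_mul]
      _ = 1 := by simp only [hA.2]; simpa using hB.2 j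

lemma qset_mulVec_vsub_aux {n : ℕ} {A : Matrix (Fin n) (Fin n) ℝ} {x : Fin n → ℝ}
    (hA : A ∈ Qset n) (hx : x ∈ Vsub n) : A.mulVec x ∈ Vsub n := by
  rw [mem_Vsub]
  simp only [Matrix.mulVec, dotProduct]
  rw [Finset.sum_comm]
  calc ∑ j, ∑ i, A i j * x j = ∑ j, (∑ i, A i j) * x j := by simp [Finset.sum_mul]
    _ = ∑ j, x j := by simp only [hA.2]; simp
    _ = 0 := hx

lemma On_mulVec_aux {n : ℕ} {x : Fin n → ℝ} (hx : x ∈ Vsub n) : (On n).mulVec x = 0 := by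
  funext i
  simp only [On, Matrix.mulVec, dotProduct, Matrix.of_apply]
  rw [← Finset.mul_sum, mem_Vsub.mp hx, mul_zero]
  rfl

lemma eq_On_aux {n : ℕ} (hn : 0 < n) {A : Matrix (Fin n) (Fin n) ℝ} (hA : A ∈ Qset n)
    (h : ∀ x ∈ Vsub n, A.mulVec x = 0) : A = On n := by
  ext i j
  have hx : ((fun t => if j = t then 1 else 0) - fun _ => (n : ℝ)⁻¹) ∈ Vsub n := by
    rw [mem_Vsub]
    simp only [Pi.sub_apply]
    rw [Finset.sum_sub_distrib]
    simp
    field_simp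
    norm_num
  have h0 := congrFun (h _ hx) i
  have hsub : A.mulVec ((fun t => if j = t then 1 else 0) - fun _ => (n : ℝ)⁻¹)
      = A.mulVec (fun t => if j = t then 1 else 0) - A.mulVec (fun _ => (n : ℝ)⁻¹) :=
    Matrix.mulVec_sub A _ _
  rw [hsub] at h0
  have h1 : A.mulVec (fun t => if j = t then 1 else 0) i = A i j := by
    simp only [Matrix.mulVec, dotProduct, mul_ite, mul_one, mul_zero]
    simp
  have h2 : A.mulVec (fun _ => (n : ℝ)⁻¹) i = (n : ℝ)⁻¹ := by
    simp only [Matrix.mulVec, dotProduct]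
    rw [← Finset.sum_mul, hA.1 i, one_mul]
  simp only [Pi.sub_apply, Pi.zero_apply] at h0
  rw [h1, h2] at h0
  have : A i j = (n : ℝ)⁻¹ := by linarith
  simpa [On] using this

lemma dual_aux {n : ℕ} (hn : 0 < n) (p : Submodule ℝ (Fin n → ℝ)) (hp : p ≤ Vsub n)
    {u : Fin n → ℝ} (hu : u ∈ Vsub n) (hnu : u ∉ p) :
    ∃ φ : (Fin n → ℝ) →ₗ[ℝ] ℝ, φ u = 1 ∧ (∀ y ∈ p, φ y = 0) ∧ φ (fun _ => 1) = 0 := by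
  set q := p ⊔ Submodule.span ℝ {(fun _ => (1 : ℝ))} with hq
  have hup : u ∉ q := by
    intro hmem
    rw [hq, Submodule.mem_sup] at hmem
    obtain ⟨y, hy, z, hz, hyz⟩ := hmem
    rw [Submodule.mem_span_singleton] at hz
    obtain ⟨c, rfl⟩ := hz
    have hsum := congrArg (fun v => ∑ i, v i) hyz
    simp only [Pi.add_apply, Pi.smul_apply, smul_eq_mul, mul_one] at hsum
    rw [Finset.sum_add_distrib, mem_Vsub.mp (hp hy), mem_Vsub.mp hu, zero_add,
      Finset.sum_const] at hsum
    simp only [Finset.card_univ, Fintype.card_fin, nsmul_eq_mul] at hsum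
    have hc : c = 0 := by
      have hnne : (n : ℝ) ≠ 0 := Nat.cast_ne_zero.mpr (by omega)
      rcases mul_eq_zero.mp hsum with h | h
      · exact absurd h hnne
      · exact h
    rw [hc, zero_smul, add_zero] at hyz
    exact hnu (hyz ▸ hy)
  obtain ⟨f, hf0, hfmap⟩ := Submodule.exists_dual_map_eq_bot_of_notMem hup inferInstance
  have hker : ∀ y ∈ q, f y = 0 := by
    intro y hy
    have : f y ∈ q.map f := Submodule.mem_map_of_mem hy
    rwa [hfmap, Submodule.mem_bot] at this
  refine ⟨(f u)⁻¹ • f, by simp; field_simp, ?_, ?_⟩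
  · intro y hy
    simp [hker y (Submodule.mem_sup_left hy)]
  · simp [hker _ (Submodule.mem_sup_right (Submodule.mem_span_singleton_self _))]


/-- For a flag `0 = V_0 ⊊ V_1 ⊊ ⋯ ⊊ V_k = V` of length `k` in the
hyperplane `V` of sum-zero vectors, the set
`T = {A ∈ Q_n : A·V_i ⊆ V_{i-1} for all i}` is a maximal element of `Nil_k(Q_n)`,
and its nilpotency class equals `k`. -/
theorem stmt12 (n k : ℕ) (hn : 2 ≤ n) (hk1 : 1 ≤ k) (hkn : k ≤ n - 1)
    (V : Fin (k + 1) → Submodule ℝ (Fin n → ℝ))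
    (h0 : V 0 = ⊥) (htop : V (Fin.last k) = Vsub n) (hmono : StrictMono V) :
    Maximal (NilLe (On n) (Qset n) k)
        {A | A ∈ Qset n ∧ ∀ i : Fin k, ∀ x ∈ V i.succ, A.mulVec x ∈ V i.castSucc} ∧
      nilClass (On n)
        {A | A ∈ Qset n ∧ ∀ i : Fin k, ∀ x ∈ V i.succ, A.mulVec x ∈ V i.castSucc} = k := by
  classical
  set T := {A | A ∈ Qset n ∧ ∀ i : Fin k, ∀ x ∈ V i.succ, A.mulVec x ∈ V i.castSucc}
    with hTdef
  have hn0 : (0 : ℕ) < n := by omega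
  set W : ℕ → Submodule ℝ (Fin n → ℝ) :=
    fun i => V ⟨min i k, Nat.lt_succ_of_le (min_le_right i k)⟩ with hWdef
  have hWmono : ∀ {i j : ℕ}, i ≤ j → W i ≤ W j := by
    intro i j hij
    rcases lt_or_eq_of_le (show min i k ≤ min j k from by omega) with h | h
    · exact le_of_lt (hmono (by simpa [Fin.lt_def] using h))
    · exact le_of_eq (by rw [hWdef]; simp only; congr 1; exact Fin.ext h)
  have hW0 : W 0 = ⊥ := by
    rw [hWdef]; simp only
    rw [show (⟨min 0 k, Nat.lt_succ_of_le (min_le_right 0 k)⟩ : Fin (k+1)) = 0 from by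
      apply Fin.ext; simp]
    exact h0
  have hWk : ∀ i, k ≤ i → W i = Vsub n := by
    intro i hi
    rw [hWdef]; simp only
    rw [show (⟨min i k, Nat.lt_succ_of_le (min_le_right i k)⟩ : Fin (k+1)) = Fin.last k from by
      apply Fin.ext; simp [Fin.last]; omega]
    exact htop
  have hWtop : ∀ i, ∀ x ∈ W i, x ∈ Vsub n := fun i x hx => by
    rw [← hWk (max i k) (le_max_right i k)]
    exact hWmono (le_max_left i k) hx
  have hVsucc : ∀ i : Fin k, V i.succ = W (i.1 + 1) := by
    intro i
    rw [hWdef]; simp only; congr 1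
    apply Fin.ext
    simp [Fin.val_succ]
  have hVcast : ∀ i : Fin k, V i.castSucc = W i.1 := by
    intro i
    rw [hWdef]; simp only; congr 1
    apply Fin.ext
    simp [Fin.coe_castSucc]
  have hT1 : ∀ A ∈ T, ∀ (i : ℕ), ∀ x ∈ W (i + 1), A.mulVec x ∈ W i := by
    intro A hA i x hx
    by_cases hik : i < k
    · have := hA.2 ⟨i, hik⟩ x (by rw [hVsucc ⟨i, hik⟩]; exact hx)
      rwa [hVcast ⟨i, hik⟩] at this
    · rw [hWk i (by omega)]
      exact qset_mulVec_vsub_aux hA.1 (hWtop _ _ hx)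
  have hT1' : ∀ A ∈ T, ∀ (i : ℕ), ∀ x ∈ W i, A.mulVec x ∈ W (i - 1) := by
    intro A hA i x hx
    cases i with
    | zero =>
      rw [hW0, Submodule.mem_bot] at hx
      subst hx
      rw [Matrix.mulVec_zero]
      exact Submodule.zero_mem _
    | succ i => simpa using hT1 A hA i x hx
  have hTinv : ∀ A ∈ T, ∀ (i : ℕ), ∀ x ∈ W i, A.mulVec x ∈ W i := by
    intro A hA i x hx
    exact hWmono (Nat.sub_le i 1) (hT1' A hA i x hx)
  have hTsub : IsSubsg T := by
    intro A hA B hB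
    refine ⟨qset_mul_aux hA.1 hB.1, ?_⟩
    intro i x hx
    rw [hVcast]
    rw [hVsucc] at hx
    rw [← Matrix.mulVec_mulVec]
    exact hTinv A hA i.1 _ (hT1 B hB i.1 x hx)
  have hfoldQ : ∀ (l : List (Matrix (Fin n) (Fin n) ℝ)) (m : ℕ) a, a ∈ Qset n →
      (∀ (i : ℕ), ∀ x ∈ W i, a.mulVec x ∈ W (i - m)) → (∀ b ∈ l, b ∈ T) →
      l.foldl (· * ·) a ∈ Qset n ∧
        ∀ (i : ℕ), ∀ x ∈ W i, (l.foldl (· * ·) a).mulVec x ∈ W (i - (m + l.length)) := by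
    intro l
    induction l with
    | nil => intro m a haQ ham _; simpa using ⟨haQ, ham⟩
    | cons b l ih =>
      intro m a haQ ham hbl
      have hbT : b ∈ T := hbl b (by simp)
      simp only [List.foldl_cons]
      have h1 : ∀ (i : ℕ), ∀ x ∈ W i, (a * b).mulVec x ∈ W (i - (m + 1)) := by
        intro i x hx
        rw [← Matrix.mulVec_mulVec]
        have h3 := ham (i - 1) _ (hT1' b hbT i x hx)
        exact hWmono (by omega) h3
      obtain ⟨hq, hm⟩ := ih (m + 1) (a * b) (qset_mul_aux haQ hbT.1) h1
        (fun c hc => hbl c (by simp [hc]))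
      refine ⟨hq, fun i x hx => ?_⟩
      have := hm i x hx
      rwa [show i - (m + 1 + l.length) = i - (m + (b :: l).length) from by simp; omega] at this
  have hProdK : ProdEq (On n) T k := by
    intro a l ha hl hlen
    obtain ⟨hQ, hmap⟩ := hfoldQ l 1 a ha.1 (hT1' a ha) hl
    apply eq_On_aux hn0 hQ
    intro x hx
    have := hmap k x (by rw [hWk k le_rfl]; exact hx)
    rwa [show k - (1 + l.length) = 0 from by omega, hW0, Submodule.mem_bot] at this
  -- chain vectors
  have hwex : ∀ i : ℕ, ∃ w : Fin n → ℝ, 1 ≤ i → i ≤ k → w ∈ W i ∧ w ∉ W (i - 1) := by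
    intro i
    by_cases h : 1 ≤ i ∧ i ≤ k
    · have hlt : W (i - 1) < W i := hmono (by simp [Fin.lt_def]; omega)
      obtain ⟨w, hw1, hw2⟩ := SetLike.exists_of_lt hlt
      exact ⟨w, fun _ _ => ⟨hw1, hw2⟩⟩
    · exact ⟨0, fun h1 h2 => absurd ⟨h1, h2⟩ h⟩
  choose w hw using hwex
  have hφex : ∀ t : ℕ, ∃ φ : (Fin n → ℝ) →ₗ[ℝ] ℝ, 1 ≤ t → t ≤ k →
      φ (w t) = 1 ∧ (∀ y ∈ W (t - 1), φ y = 0) ∧ φ (fun _ => 1) = 0 := by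
    intro t
    by_cases h : 1 ≤ t ∧ t ≤ k
    · obtain ⟨hw1, hw2⟩ := hw t h.1 h.2
      obtain ⟨φ, h1, h2, h3⟩ := dual_aux hn0 (W (t - 1)) (hWtop _) (hWtop _ _ hw1) hw2
      exact ⟨φ, fun _ _ => ⟨h1, h2, h3⟩⟩
    · exact ⟨0, fun h1 h2 => absurd ⟨h1, h2⟩ h⟩
  choose φ hφ using hφex
  have hrank : ∀ (ψ : (Fin n → ℝ) →ₗ[ℝ] ℝ) (u : Fin n → ℝ) (m : ℕ), 1 ≤ m → m ≤ k →
      u ∈ W (m - 1) → (∀ y ∈ W (m - 1), ψ y = 0) → ψ (fun _ => 1) = 0 →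
      extMat n (ψ.smulRight u) ∈ T ∧
        ∀ x ∈ Vsub n, (extMat n (ψ.smulRight u)).mulVec x = ψ x • u := by
    intro ψ u m hm1 hmk hu hψ0 hψ1
    have hg1 : (ψ.smulRight u) (fun _ => 1) = 0 := by
      simp [LinearMap.smulRight_apply, hψ1]
    have hgV : ∀ x, (ψ.smulRight u) x ∈ Vsub n := fun x =>
      (Vsub n).smul_mem _ (hWtop _ _ hu)
    have hmve : ∀ x ∈ Vsub n, (extMat n (ψ.smulRight u)).mulVec x = ψ x • u := by
      intro x hx
      rw [extMat_mulVec _ x hx]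
      simp [LinearMap.smulRight_apply]
    refine ⟨⟨extMat_mem hn0 _ hg1 hgV, ?_⟩, hmve⟩
    intro i x hx
    rw [hVcast]
    rw [hVsucc] at hx
    rw [hmve x (hWtop _ _ hx)]
    by_cases hc : i.1 + 1 ≤ m - 1
    · rw [hψ0 x (hWmono hc hx)]
      simp
    · exact hWmono (by omega) ((W (m - 1)).smul_mem _ hu)
  set A : ℕ → Matrix (Fin n) (Fin n) ℝ :=
    fun t => extMat n ((φ t).smulRight (w (t - 1))) with hAdef
  have hAT : ∀ t, 2 ≤ t → t ≤ k → A t ∈ T := by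
    intro t h2 hk'
    exact (hrank (φ t) (w (t - 1)) t (by omega) hk'
      ((hw (t - 1) (by omega) (by omega)).1)
      ((hφ t (by omega) hk').2.1) ((hφ t (by omega) hk').2.2)).1
  have hAact : ∀ t, 2 ≤ t → t ≤ k → (A t).mulVec (w t) = w (t - 1) := by
    intro t h2 hk'
    rw [(hrank (φ t) (w (t - 1)) t (by omega) hk'
      ((hw (t - 1) (by omega) (by omega)).1)
      ((hφ t (by omega) hk').2.1) ((hφ t (by omega) hk').2.2)).2 (w t)
      (hWtop _ _ (hw t (by omega) hk').1)]
    rw [(hφ t (by omega) hk').1, one_smul]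
  have hw1ne : w 1 ≠ 0 := by
    intro hcon
    have := (hw 1 le_rfl hk1).2
    rw [hcon] at this
    exact this (by simp [hW0])
  have hNotProd : ∀ K, 1 ≤ K → K ≤ k - 1 → ¬ ProdEq (On n) T K := by
    intro K h1 h2 hPE
    have hchain := chain_foldl_aux (fun t => A (t + 1)) (fun t => w (t + 1)) K h1 (by
      intro t ht htK
      rw [show t - 1 + 1 = t from by omega]
      have := hAact (t + 1) (by omega) (by omega)
      rwa [show t + 1 - 1 = t from by omega] at this)
    have heq := hPE (A 2) ((List.range (K - 1)).map (fun s => A (s + 3)))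
      (hAT 2 le_rfl (by omega))
      (by
        intro b hb
        simp only [List.mem_map, List.mem_range] at hb
        obtain ⟨s, hs, rfl⟩ := hb
        exact hAT (s + 3) (by omega) (by omega))
      (by simp [List.length_map, List.length_range]; omega)
    rw [show ((List.range (K - 1)).map fun s => A (s + 3))
        = ((List.range (K - 1)).map fun s => (fun t => A (t + 1)) (s + 2)) from rfl] at heq
    rw [heq] at hchain
    rw [On_mulVec_aux (hWtop _ _ (hw (K + 1) (by omega) (by omega)).1)] at hchain
    exact hw1ne hchain.symm
  have hkmem : k ∈ {m | 0 < m ∧ ProdEq (On n) T m} := ⟨by omega, hProdK⟩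
  have hclass : nilClass (On n) T = k := by
    refine le_antisymm (Nat.sInf_le hkmem) ?_
    by_contra hlt
    push_neg at hlt
    have hmem := Nat.sInf_mem (⟨k, hkmem⟩ : {m | 0 < m ∧ ProdEq (On n) T m}.Nonempty)
    have hsinf : nilClass (On n) T = sInf {m | 0 < m ∧ ProdEq (On n) T m} := rfl
    exact hNotProd _ hmem.1 (by omega) hmem.2
  refine ⟨⟨⟨fun A hA => hA.1, ⟨hTsub, k, by omega, hProdK⟩, Nat.sInf_le hkmem⟩, ?_⟩, hclass⟩
  intro T' hT' hsub B hB
  have hBQ : B ∈ Qset n := hT'.1 hB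
  have hPE' : ProdEq (On n) T' k := by
    obtain ⟨hsub', ⟨hsg', k', hk', hpe'⟩, hle'⟩ := hT'
    have hmem' := Nat.sInf_mem (⟨k', hk', hpe'⟩ :
      {m | 0 < m ∧ ProdEq (On n) T' m}.Nonempty)
    exact prodEq_mono_aux hsg' hmem'.1 hmem'.2 (le_trans hle' (le_refl k))
  have hkey : ∀ jj : ℕ, 1 ≤ jj → jj ≤ k → ∀ x ∈ W jj, B.mulVec x ∈ W (jj - 1) := by
    by_contra hbad
    push_neg at hbad
    set bad := {jj : ℕ | 1 ≤ jj ∧ jj ≤ k ∧ ∃ x ∈ W jj, B.mulVec x ∉ W (jj - 1)} with hbaddef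
    have hbadne : bad.Nonempty := by
      obtain ⟨jj, h1, h2, x, hx1, hx2⟩ := hbad
      exact ⟨jj, h1, h2, x, hx1, hx2⟩
    set j := sInf bad with hjdef
    obtain ⟨hj1, hjk, x, hxj, hBx⟩ := Nat.sInf_mem hbadne
    have hxnot : x ∉ W (j - 1) := by
      intro hxin
      rcases Nat.eq_or_lt_of_le hj1 with h | h
      · rw [show j - 1 = 0 from by omega, hW0, Submodule.mem_bot] at hxin
        subst hxin
        exact hBx (by rw [Matrix.mulVec_zero]; exact Submodule.zero_mem _)
      · have hjm : (j - 1) ∈ bad := ⟨by omega, by omega, x, hxin, by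
          intro hcon
          exact hBx (hWmono (by omega) hcon)⟩
        have := Nat.sInf_le hjm
        omega
    have hBxV : B.mulVec x ∈ Vsub n := qset_mulVec_vsub_aux hBQ (hWtop _ _ hxj)
    set good := {mm : ℕ | B.mulVec x ∈ W mm} with hgooddef
    have hkgood : k ∈ good := by
      show B.mulVec x ∈ W k
      rw [hWk k le_rfl]; exact hBxV
    set m := sInf good with hmdef
    have hmmem : B.mulVec x ∈ W m := Nat.sInf_mem ⟨k, hkgood⟩
    have hmk : m ≤ k := Nat.sInf_le hkgood
    have hjm : j ≤ m := by
      by_contra hcon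
      push_neg at hcon
      exact hBx (hWmono (by omega) hmmem)
    have hBxnot : B.mulVec x ∉ W (m - 1) := by
      intro hc
      have h2 : (m - 1) ∈ good := hc
      have := Nat.sInf_le h2
      omega
    -- modified chain with w' j = x
    set w' : ℕ → (Fin n → ℝ) := fun t => if t = j then x else w t with hw'def
    have hw' : ∀ t, 1 ≤ t → t ≤ k → w' t ∈ W t ∧ w' t ∉ W (t - 1) := by
      intro t h1 h2
      by_cases ht : t = j
      · rw [hw'def]
        simp only [ht, if_pos rfl]
        subst ht
        exact ⟨hxj, hxnot⟩
      · rw [hw'def]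
        simp only [if_neg ht]
        exact hw t h1 h2
    have hφ'ex : ∀ t : ℕ, ∃ ψ : (Fin n → ℝ) →ₗ[ℝ] ℝ, 1 ≤ t → t ≤ k →
        ψ (w' t) = 1 ∧ (∀ y ∈ W (t - 1), ψ y = 0) ∧ ψ (fun _ => 1) = 0 := by
      intro t
      by_cases h : 1 ≤ t ∧ t ≤ k
      · obtain ⟨hw1, hw2⟩ := hw' t h.1 h.2
        obtain ⟨ψ, h1, h2, h3⟩ := dual_aux hn0 (W (t - 1)) (hWtop _) (hWtop _ _ hw1) hw2
        exact ⟨ψ, fun _ _ => ⟨h1, h2, h3⟩⟩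
      · exact ⟨0, fun h1 h2 => absurd ⟨h1, h2⟩ h⟩
    choose φ' hφ' using hφ'ex
    set A' : ℕ → Matrix (Fin n) (Fin n) ℝ :=
      fun t => extMat n ((φ' t).smulRight (w' (t - 1))) with hA'def
    have hA'T : ∀ t, 2 ≤ t → t ≤ k → A' t ∈ T := by
      intro t h2 hk'
      exact (hrank (φ' t) (w' (t - 1)) t (by omega) hk'
        ((hw' (t - 1) (by omega) (by omega)).1)
        ((hφ' t (by omega) hk').2.1) ((hφ' t (by omega) hk').2.2)).1
    have hA'act : ∀ t, 2 ≤ t → t ≤ k → (A' t).mulVec (w' t) = w' (t - 1) := by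
      intro t h2 hk'
      rw [(hrank (φ' t) (w' (t - 1)) t (by omega) hk'
        ((hw' (t - 1) (by omega) (by omega)).1)
        ((hφ' t (by omega) hk').2.1) ((hφ' t (by omega) hk').2.2)).2 (w' t)
        (hWtop _ _ (hw' t (by omega) hk').1)]
      rw [(hφ' t (by omega) hk').1, one_smul]
    have hw'1ne : w' 1 ≠ 0 := by
      intro hcon
      have := (hw' 1 le_rfl hk1).2
      rw [hcon] at this
      exact this (by simp [hW0])
    rcases Nat.eq_or_lt_of_le hj1 with hj1' | hj2
    · -- case j = 1
      set Mf : ℕ → Matrix (Fin n) (Fin n) ℝ := fun t => if t = 1 then B else A' t with hMfdef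
      set yf : ℕ → (Fin n → ℝ) := fun t => if t = 0 then B.mulVec x else w' t with hyfdef
      have hchain := chain_foldl_aux Mf yf k hk1 (by
        intro t ht htk
        by_cases ht1 : t = 1
        · subst ht1
          have hw'1 : w' 1 = x := by rw [hw'def]; simp only []; rw [if_pos hj1']
          rw [hMfdef, hyfdef]
          norm_num
          rw [hw'1]
        · rw [hMfdef, hyfdef]
          simp only [if_neg ht1, if_neg (show t ≠ 0 from by omega),
            if_neg (show t - 1 ≠ 0 from by omega)]
          exact hA'act t (by omega) htk)
      have heq := hPE' (Mf 1) ((List.range (k - 1)).map (fun s => Mf (s + 2)))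
        (by
          rw [hMfdef]; simp only [if_pos rfl]
          exact hB)
        (by
          intro b hbmem
          simp only [List.mem_map, List.mem_range] at hbmem
          obtain ⟨s, hs, rfl⟩ := hbmem
          rw [hMfdef]
          simp only [if_neg (show s + 2 ≠ 1 from by omega)]
          exact hsub (hA'T (s + 2) (by omega) (by omega)))
        (by simp [List.length_map, List.length_range]; omega)
      rw [heq] at hchain
      have hyfk : yf k ∈ Vsub n := by
        rw [hyfdef]
        simp only [if_neg (show k ≠ 0 from by omega)]
        exact hWtop _ _ (hw' k hk1 le_rfl).1
      rw [On_mulVec_aux hyfk] at hchain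
      have : yf 0 = 0 := hchain.symm
      rw [hyfdef] at this
      simp at this
      apply hBx
      rw [this, show j - 1 = 0 from by omega, hW0]
      exact Submodule.zero_mem _
    · -- case j ≥ 2
      obtain ⟨ψ, hψ1, hψ2, hψ3⟩ := dual_aux hn0 (W (m - 1)) (hWtop _) hBxV hBxnot
      set F : Matrix (Fin n) (Fin n) ℝ := extMat n (ψ.smulRight (w' (j - 1))) with hFdef
      have hFrk := hrank ψ (w' (j - 1)) m (by omega) hmk
        (hWmono (show j - 1 ≤ m - 1 from by omega) (hw' (j - 1) (by omega) (by omega)).1)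
        hψ2 hψ3
      have hFT : F ∈ T := hFrk.1
      have hFact : F.mulVec (B.mulVec x) = w' (j - 1) := by
        rw [hFrk.2 (B.mulVec x) hBxV, hψ1, one_smul]
      set Mf : ℕ → Matrix (Fin n) (Fin n) ℝ := fun t =>
        if t < j - 1 then A' (t + 1) else if t = j - 1 then F else if t = j then B else A' t
        with hMfdef
      set yf : ℕ → (Fin n → ℝ) := fun t =>
        if t < j - 1 then w' (t + 1) else if t = j - 1 then B.mulVec x else w' t with hyfdef
      have hchain := chain_foldl_aux Mf yf k hk1 (by
        intro t ht htk
        rw [hMfdef, hyfdef]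
        rcases lt_trichotomy t (j - 1) with hc | hc | hc
        · simp only [if_pos hc, if_pos (show t - 1 < j - 1 from by omega)]
          have := hA'act (t + 1) (by omega) (by omega)
          rw [show t + 1 - 1 = t from by omega] at this
          rw [this, show t - 1 + 1 = t from by omega]
        · simp only [if_neg (show ¬ t < j - 1 from by omega), if_pos hc,
            if_pos (show t - 1 < j - 1 from by omega)]
          rw [hFact, show t - 1 + 1 = j - 1 from by omega]
        · by_cases hcj : t = j
          · simp only [if_neg (show ¬ t < j - 1 from by omega),
              if_neg (show t ≠ j - 1 from by omega), if_pos hcj,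
              if_neg (show ¬ t - 1 < j - 1 from by omega),
              if_pos (show t - 1 = j - 1 from by omega)]
            subst hcj
            rw [hw'def]
            simp
          · simp only [if_neg (show ¬ t < j - 1 from by omega),
              if_neg (show t ≠ j - 1 from by omega), if_neg hcj,
              if_neg (show ¬ t - 1 < j - 1 from by omega),
              if_neg (show t - 1 ≠ j - 1 from by omega)]
            exact hA'act t (by omega) htk)
      have hMfT' : ∀ t, 1 ≤ t → t ≤ k → Mf t ∈ T' := by
        intro t h1t htk
        rw [hMfdef]
        rcases lt_trichotomy t (j - 1) with hc | hc | hc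
        · simp only [if_pos hc]
          exact hsub (hA'T (t + 1) (by omega) (by omega))
        · simp only [if_neg (show ¬ t < j - 1 from by omega), if_pos hc]
          exact hsub hFT
        · by_cases hcj : t = j
          · simp only [if_neg (show ¬ t < j - 1 from by omega),
              if_neg (show t ≠ j - 1 from by omega), if_pos hcj]
            exact hB
          · simp only [if_neg (show ¬ t < j - 1 from by omega),
              if_neg (show t ≠ j - 1 from by omega), if_neg hcj]
            exact hsub (hA'T t (by omega) htk)
      have heq := hPE' (Mf 1) ((List.range (k - 1)).map (fun s => Mf (s + 2)))
        (hMfT' 1 le_rfl hk1)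
        (by
          intro b hbmem
          simp only [List.mem_map, List.mem_range] at hbmem
          obtain ⟨s, hs, rfl⟩ := hbmem
          exact hMfT' (s + 2) (by omega) (by omega))
        (by simp [List.length_map, List.length_range]; omega)
      rw [heq] at hchain
      have hyfk : yf k ∈ Vsub n := by
        rw [hyfdef]
        simp only [if_neg (show ¬ k < j - 1 from by omega),
          if_neg (show k ≠ j - 1 from by omega)]
        exact hWtop _ _ (hw' k hk1 le_rfl).1
      rw [On_mulVec_aux hyfk] at hchain
      have hy0 : yf 0 = w' 1 := by
        rw [hyfdef]
        simp only [if_pos (show 0 < j - 1 from by omega)]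
      rw [hy0] at hchain
      exact hw'1ne hchain.symm

  refine ⟨hBQ, ?_⟩
  intro i x hx
  rw [hVcast]
  rw [hVsucc] at hx
  have := hkey (i.1 + 1) (by omega) (by omega) x hx
  simpa using this


end NilSg
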